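/- Let X be a noncompact locally compact Polish space, Y a Hausdorff space, and f : X → Y a continuous bijection such that for some x₀ ∈ X every sequence in X converging to infinity has f-image converging to f(x₀). Then Y is metrizable; in fact Y is homeomorphic to the compact metric space (X,δ) for the explicitly constructed metric δ(x,y) = min(d(x,y), h(x)+h(y)), and hence Y is a compact Polish space. -/

import Mathlib

open Filter Topology

/-- Type copy of `X`, to carry the new metric `δ`. -/
structure Stmt19XC (X : Type*) where
  /-- the underlying point -/
  down : X

/-- The metric `δ(x,y) = min (d x y) (h x + h y)`. -/
noncomputable def stmt19Metric {X : Type*} [MetricSpace X] (h : X → ℝ)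
    (Dself : ∀ x : X, min (dist x x) (h x + h x) = 0)
    (Dcomm : ∀ x y : X, min (dist x y) (h x + h y) = min (dist y x) (h y + h x))
    (Dtri : ∀ x y z : X, min (dist x z) (h x + h z) ≤
      min (dist x y) (h x + h y) + min (dist y z) (h y + h z))
    (Deq : ∀ x y : X, min (dist x y) (h x + h y) = 0 → x = y) : MetricSpace X :=
  { dist := fun x y => min (dist x y) (h x + h y)
    dist_self := Dself
    dist_comm := Dcomm
    dist_triangle := Dtri
    eq_of_dist_eq_zero := fun {x y} => Deq x y }

theorem stmt19_down_injective {X : Type*} :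
    Function.Injective (Stmt19XC.down (X := X)) := by
  intro a b hab; cases a; cases b; cases hab; rfl

/-- The metric `δ` transferred to the type copy. -/
noncomputable def stmt19MetricXC {X : Type*} [MetricSpace X] (h : X → ℝ)
    (Dself : ∀ x : X, min (dist x x) (h x + h x) = 0)
    (Dcomm : ∀ x y : X, min (dist x y) (h x + h y) = min (dist y x) (h y + h x))
    (Dtri : ∀ x y z : X, min (dist x z) (h x + h z) ≤
      min (dist x y) (h x + h y) + min (dist y z) (h y + h z))
    (Deq : ∀ x y : X, min (dist x y) (h x + h y) = 0 → x = y) :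
    MetricSpace (Stmt19XC X) :=
  MetricSpace.induced Stmt19XC.down stmt19_down_injective
    (stmt19Metric h Dself Dcomm Dtri Deq)

theorem stmt_19 {X Y : Type*} [MetricSpace X] [CompleteSpace X]
    [TopologicalSpace.SeparableSpace X] [LocallyCompactSpace X] [NoncompactSpace X]
    [TopologicalSpace Y] [T2Space Y]
    (f : X → Y) (hf : Continuous f) (hbij : Function.Bijective f)
    (x₀ : X)
    (hx₀ : ∀ u : ℕ → X, (∀ C : Set X, IsCompact C → ∀ᶠ n in atTop, u n ∉ C) →
      Tendsto (fun n => f (u n)) atTop (𝓝 (f x₀)))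
    (K : ℕ → Set X) (hKc : ∀ n, IsCompact (K n))
    (hKmono : ∀ n, K n ⊆ interior (K (n + 1))) (hKunion : (⋃ n, K n) = Set.univ)
    (r : ℕ → ℝ) (hr : StrictAnti r) (hrpos : ∀ n, 0 < r n)
    (hrlim : Tendsto r atTop (𝓝 0))
    (hnbhd : ∀ n, {x : X | ∃ v ∈ K n, dist x v < r n} ⊆ K (n + 1))
    (hx₀K : x₀ ∈ K 0)
    (g : X → ℝ)
    (hg : ∀ x : X, ∃ n : ℕ, g x = r n - Metric.infDist x (K n) ∧
      ∀ m : ℕ, r m - Metric.infDist x (K m) ≤ g x)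
    (h : X → ℝ) (hh : ∀ x, h x = min (dist x x₀) (g x)) :
    TopologicalSpace.MetrizableSpace Y ∧ CompactSpace Y ∧ PolishSpace Y ∧
      ∃ m : MetricSpace X,
        (∀ x y : X, m.dist x y = min (dist x y) (h x + h y)) ∧
        @CompactSpace X m.toUniformSpace.toTopologicalSpace ∧
        Nonempty (@Homeomorph Y X _ m.toUniformSpace.toTopologicalSpace) := by
  classical
  -- basic facts about the exhaustion
  have hKmono' : Monotone K := monotone_nat_of_le_succ fun n =>
    (hKmono n).trans interior_subset
  have hKne : ∀ n, (K n).Nonempty := fun n => ⟨x₀, hKmono' (Nat.zero_le n) hx₀K⟩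
  have hmemK : ∀ x : X, ∃ n, x ∈ K n := fun x =>
    Set.mem_iUnion.1 (hKunion.symm ▸ Set.mem_univ x)
  -- `g` is positive
  have hgpos : ∀ x, 0 < g x := by
    intro x
    obtain ⟨n, hn⟩ := hmemK x
    obtain ⟨m, -, hmax⟩ := hg x
    have := hmax n
    rw [Metric.infDist_zero_of_mem hn] at this
    linarith [hrpos n]
  -- `g` is 1-Lipschitz
  have hglip : ∀ x y : X, g x ≤ g y + dist x y := by
    intro x y
    obtain ⟨n, hgx, -⟩ := hg x
    obtain ⟨m, -, hmy⟩ := hg y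
    have h1 : Metric.infDist y (K n) ≤ Metric.infDist x (K n) + dist y x :=
      Metric.infDist_le_infDist_add_dist
    have h2 := hmy n
    rw [dist_comm y x] at h1
    rw [hgx]
    linarith
  -- facts about `h`
  have hh0 : ∀ x, 0 ≤ h x := fun x => (hh x) ▸ le_min dist_nonneg (hgpos x).le
  have hhx₀ : h x₀ = 0 := by
    rw [hh]; simp [min_eq_left (hgpos x₀).le]
  have hhzero : ∀ x, h x = 0 → x = x₀ := by
    intro x hx
    rw [hh] at hx
    rcases le_total (dist x x₀) (g x) with hle | hle
    · rw [min_eq_left hle] at hx; exact dist_eq_zero.1 hx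
    · rw [min_eq_right hle] at hx; exact absurd hx (hgpos x).ne'
  have hhlip : ∀ x y : X, h x ≤ h y + dist x y := by
    intro x y
    rw [hh, hh]
    have h1 : dist x x₀ ≤ dist y x₀ + dist x y := by
      have h3 := dist_triangle x y x₀
      have h4 : dist x y = dist y x := dist_comm x y
      linarith
    have h2 := hglip x y
    rcases le_total (dist y x₀) (g y) with hle | hle
    · rw [min_eq_left hle]
      exact (min_le_left _ _).trans h1
    · rw [min_eq_right hle]
      exact (min_le_right _ _).trans h2
  -- metric axioms for the new distance
  have Dself : ∀ x : X, min (dist x x) (h x + h x) = 0 := by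
    intro x; rw [dist_self, min_eq_left (by linarith [hh0 x])]
  have Dcomm : ∀ x y : X, min (dist x y) (h x + h y) = min (dist y x) (h y + h x) := by
    intro x y; rw [dist_comm, add_comm]
  have Dtri : ∀ x y z : X, min (dist x z) (h x + h z) ≤
      min (dist x y) (h x + h y) + min (dist y z) (h y + h z) := by
    intro x y z
    rcases le_total (dist x y) (h x + h y) with h1 | h1 <;>
      rcases le_total (dist y z) (h y + h z) with h2 | h2
    · rw [min_eq_left h1, min_eq_left h2]
      exact (min_le_left _ _).trans (dist_triangle x y z)
    · rw [min_eq_left h1, min_eq_right h2]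
      have h3 := hhlip x y
      have h4 := min_le_right (dist x z) (h x + h z)
      linarith
    · rw [min_eq_right h1, min_eq_left h2]
      have h3 : h z ≤ h y + dist y z := by
        have h5 := hhlip z y
        have h6 : dist z y = dist y z := dist_comm z y
        linarith
      have h4 := min_le_right (dist x z) (h x + h z)
      linarith
    · rw [min_eq_right h1, min_eq_right h2]
      have h3 := min_le_right (dist x z) (h x + h z)
      have h4 := hh0 y
      linarith
  have Deq : ∀ x y : X, min (dist x y) (h x + h y) = 0 → x = y := by
    intro x y hxy
    rcases le_total (dist x y) (h x + h y) with hle | hle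
    · rw [min_eq_left hle] at hxy; exact dist_eq_zero.1 hxy
    · rw [min_eq_right hle] at hxy
      have hx : h x = 0 := le_antisymm (by linarith [hh0 y]) (hh0 x)
      have hy : h y = 0 := le_antisymm (by linarith [hh0 x]) (hh0 y)
      rw [hhzero x hx, hhzero y hy]
  -- absorption of compact sets by the exhaustion
  have habs : ∀ C : Set X, IsCompact C → ∃ m, C ⊆ K m := by
    intro C hC
    have hcover : C ⊆ ⋃ n, interior (K (n + 1)) := by
      intro x _
      obtain ⟨n, hn⟩ := hmemK x
      exact Set.mem_iUnion.2 ⟨n, hKmono n hn⟩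
    obtain ⟨s, hs⟩ := hC.elim_finite_subcover (fun n => interior (K (n + 1)))
      (fun n => isOpen_interior) hcover
    refine ⟨s.sup id + 1, fun x hx => ?_⟩
    obtain ⟨n, hns, hxn⟩ : ∃ n ∈ s, x ∈ interior (K (n + 1)) := by
      simpa using hs hx
    exact hKmono' (Nat.succ_le_succ (Finset.le_sup (f := id) hns)) (interior_subset hxn)
  -- outside `K (m+1)`, `g` is at most `r (m+1)`
  have hgout : ∀ (m : ℕ) (x : X), x ∉ K (m + 1) → g x ≤ r (m + 1) := by
    intro m x hx
    obtain ⟨n, hgx, -⟩ := hg x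
    rcases le_or_gt n m with hnm | hmn
    · have hxn : x ∉ K (n + 1) := fun hmem => hx (hKmono' (by omega) hmem)
      have hinf : r n ≤ Metric.infDist x (K n) := by
        by_contra hlt
        push_neg at hlt
        obtain ⟨v, hv, hvd⟩ := (Metric.infDist_lt_iff (hKne n)).1 hlt
        exact hxn (hnbhd n ⟨v, hv, hvd⟩)
      rw [hgx]
      linarith [hrpos (m + 1)]
    · rw [hgx]
      have h1 : r n ≤ r (m + 1) := hr.antitone (by omega)
      linarith [Metric.infDist_nonneg (x := x) (s := K n)]
  -- if a sequence escapes every `K m`, then `h ∘ u → 0`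
  have hto : ∀ u : ℕ → X, (∀ m, ∀ᶠ n in atTop, u n ∉ K m) →
      Tendsto (fun n => h (u n)) atTop (𝓝 0) := by
    intro u hu
    rw [Metric.tendsto_atTop]
    intro ε hε
    obtain ⟨N, hN⟩ := (hrlim.eventually (gt_mem_nhds hε)).exists
    have hN' : r (N + 1) < ε := lt_trans (hr (Nat.lt_succ_self N)) hN
    obtain ⟨M, hM⟩ := (hu (N + 1)).exists_forall_of_atTop
    refine ⟨M, fun n hn => ?_⟩
    have h1 : h (u n) ≤ g (u n) := (hh (u n)) ▸ min_le_right _ _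
    have h2 : g (u n) ≤ r (N + 1) := hgout N (u n) (hM n hn)
    rw [Real.dist_eq, sub_zero, abs_of_nonneg (hh0 (u n))]
    linarith
  -- the new metric space structure, on `X` and on the copy
  letI : MetricSpace (Stmt19XC X) := stmt19MetricXC h Dself Dcomm Dtri Deq
  have hdd : ∀ p q : Stmt19XC X,
      dist p q = min (dist p.down q.down) (h p.down + h q.down) := fun _ _ => rfl
  -- δ-convergence from d-convergence
  have tendsto_delta_of_dist : ∀ (u : ℕ → Stmt19XC X) (a : Stmt19XC X),
      Tendsto (fun n => dist (u n).down a.down) atTop (𝓝 0) →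
      Tendsto u atTop (𝓝 a) := by
    intro u a hu
    rw [tendsto_iff_dist_tendsto_zero]
    refine squeeze_zero (fun n => dist_nonneg) (fun n => ?_) hu
    rw [hdd]
    exact min_le_left _ _
  -- δ-convergence to x₀ from h → 0
  have tendsto_delta_x₀ : ∀ u : ℕ → Stmt19XC X,
      Tendsto (fun n => h (u n).down) atTop (𝓝 0) →
      Tendsto u atTop (𝓝 (Stmt19XC.mk x₀)) := by
    intro u hu
    rw [tendsto_iff_dist_tendsto_zero]
    refine squeeze_zero (fun n => dist_nonneg) (fun n => ?_) hu
    rw [hdd]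
    calc min (dist (u n).down x₀) (h (u n).down + h x₀) ≤ h (u n).down + h x₀ :=
          min_le_right _ _
      _ = h (u n).down := by rw [hhx₀, add_zero]
  -- (XC, δ) is sequentially compact, hence compact
  haveI hseq : SeqCompactSpace (Stmt19XC X) := by
    refine ⟨fun u _ => ?_⟩
    by_cases hc : ∃ m, ∃ᶠ n in atTop, (u n).down ∈ K m
    · obtain ⟨m, hm⟩ := hc
      obtain ⟨φ, hφ, hφm⟩ := Filter.extraction_of_frequently_atTop hm
      obtain ⟨x, -, ψ, hψ, hψt⟩ := (hKc m).tendsto_subseq hφm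
      refine ⟨Stmt19XC.mk x, Set.mem_univ _, φ ∘ ψ, hφ.comp hψ, ?_⟩
      exact tendsto_delta_of_dist _ (Stmt19XC.mk x) (tendsto_iff_dist_tendsto_zero.1 hψt)
    · push_neg at hc
      exact ⟨Stmt19XC.mk x₀, Set.mem_univ _, id, strictMono_id,
        tendsto_delta_x₀ _ (hto _ hc)⟩
  haveI hcomp : CompactSpace (Stmt19XC X) :=
    compactSpace_iff_seqCompactSpace.2 hseq
  -- `f ∘ down` is continuous on (XC, δ)
  have hfc : Continuous (fun x : Stmt19XC X => f x.down) := by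
    apply SeqContinuous.continuous
    intro u a hu
    rcases eq_or_ne a.down x₀ with ha | ha
    · -- the limit is x₀
      apply tendsto_of_subseq_tendsto
      intro ns hns
      by_cases hc : ∃ m, ∃ᶠ n in atTop, (u (ns n)).down ∈ K m
      · obtain ⟨m, hm⟩ := hc
        obtain ⟨φ, hφ, hφm⟩ := Filter.extraction_of_frequently_atTop hm
        obtain ⟨x, -, ψ, hψ, hψt⟩ := (hKc m).tendsto_subseq hφm
        have hδx : Tendsto (fun k => u (ns (φ (ψ k)))) atTop (𝓝 (Stmt19XC.mk x)) :=
          tendsto_delta_of_dist _ (Stmt19XC.mk x) (tendsto_iff_dist_tendsto_zero.1 hψt)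
        have hδa : Tendsto (fun k => u (ns ((φ ∘ ψ) k))) atTop (𝓝 a) :=
          hu.comp (hns.comp (hφ.comp hψ).tendsto_atTop)
        have hxa : Stmt19XC.mk x = a := tendsto_nhds_unique hδx hδa
        refine ⟨φ ∘ ψ, ?_⟩
        have hfx : Tendsto (fun k => f (u (ns (φ (ψ k)))).down) atTop (𝓝 (f x)) :=
          (hf.tendsto x).comp hψt
        have hx' : f x = f a.down := by rw [← hxa]
        rw [hx'] at hfx
        exact hfx
      · push_neg at hc
        refine ⟨id, ?_⟩
        have hres := hx₀ (fun n => (u (ns n)).down) ?_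
        · rw [← ha] at hres
          exact hres
        · intro C hC
          obtain ⟨m, hm⟩ := habs C hC
          exact (hc m).mono fun n hn hmem => hn (hm hmem)
    · -- the limit is not x₀
      have hha : 0 < h a.down := by
        rcases (hh0 a.down).lt_or_eq with hlt | heq
        · exact hlt
        · exact absurd (hhzero _ heq.symm) ha
      have hD0 : Tendsto (fun n => dist (u n) a) atTop (𝓝 0) :=
        tendsto_iff_dist_tendsto_zero.1 hu
      have hev : ∀ᶠ n in atTop, dist (u n) a < h a.down :=
        hD0.eventually (gt_mem_nhds hha)
      have hdist0 : Tendsto (fun n => dist (u n).down a.down) atTop (𝓝 0) := by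
        refine hD0.congr' (hev.mono fun n hn => ?_)
        rw [hdd] at hn ⊢
        rcases le_total (dist (u n).down a.down) (h (u n).down + h a.down) with hle | hle
        · rw [min_eq_left hle]
        · exfalso
          rw [min_eq_right hle] at hn
          have := hh0 (u n).down
          linarith
      exact (hf.tendsto a.down).comp (tendsto_iff_dist_tendsto_zero.2 hdist0)
  -- the homeomorphism with Y
  have hdownbij : Function.Bijective (Stmt19XC.down (X := X)) :=
    ⟨stmt19_down_injective, fun x => ⟨Stmt19XC.mk x, rfl⟩⟩
  have hbij' : Function.Bijective (fun x : Stmt19XC X => f x.down) := hbij.comp hdownbij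
  let e : Stmt19XC X ≃ Y := Equiv.ofBijective _ hbij'
  have heC : Continuous (e : Stmt19XC X → Y) := hfc
  let E : Stmt19XC X ≃ₜ Y := Continuous.homeoOfEquivCompactToT2 heC
  haveI hpolish : PolishSpace (Stmt19XC X) := inferInstance
  -- homeomorphism between the copy and `X` with the new metric topology
  let eqv : Stmt19XC X ≃ X :=
    { toFun := Stmt19XC.down
      invFun := Stmt19XC.mk
      left_inv := fun p => rfl
      right_inv := fun x => rfl }
  have hind : @IsInducing (Stmt19XC X) X _ (stmt19Metric h Dself Dcomm Dtri Deq).toUniformSpace.toTopologicalSpace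
      Stmt19XC.down :=
    @IsInducing.mk (Stmt19XC X) X _
      (stmt19Metric h Dself Dcomm Dtri Deq).toUniformSpace.toTopologicalSpace Stmt19XC.down rfl
  let eqvH : @Homeomorph (Stmt19XC X) X _ (stmt19Metric h Dself Dcomm Dtri Deq).toUniformSpace.toTopologicalSpace :=
    @Equiv.toHomeomorphOfIsInducing _ _ _ (stmt19Metric h Dself Dcomm Dtri Deq).toUniformSpace.toTopologicalSpace eqv hind
  have hcompX : @CompactSpace X (stmt19Metric h Dself Dcomm Dtri Deq).toUniformSpace.toTopologicalSpace :=
    @Homeomorph.compactSpace _ _ _ (stmt19Metric h Dself Dcomm Dtri Deq).toUniformSpace.toTopologicalSpace hcomp eqvH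
  refine ⟨E.symm.isEmbedding.metrizableSpace, E.compactSpace,
    E.symm.isClosedEmbedding.polishSpace,
    ⟨stmt19Metric h Dself Dcomm Dtri Deq, ?_, ?_, ?_⟩⟩
  · intro x y
    exact (min_eq_left (min_le_right (dist x y) (h x + h y))).symm
  · exact hcompX
  · exact ⟨@Homeomorph.trans Y (Stmt19XC X) X _ _
      (stmt19Metric h Dself Dcomm Dtri Deq).toUniformSpace.toTopologicalSpace E.symm eqvH⟩
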